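/- arXiv:2509.04863 — 4 statements merged into one kernel-verified Lean document; each statement's English description precedes it below -/
import Mathlib

section
/- Let R be a ring and let f : M₁ → M₀ be a morphism of R-modules, regarded as an object of the arrow category Arrow(Mod R). Then f is a projective object of Arrow(Mod R) if and only if f is isomorphic in Arrow(Mod R) to a direct sum (0 → P) ⊕ (id_Q : Q → Q) for some projective R-modules P and Q. -/
set_option maxHeartbeats 1000000
set_option synthInstance.maxHeartbeats 400000
open CategoryTheory CategoryTheory.Limits ZeroObject

variable {R : Type*} [Ring R]

/-- The componentwise direct sum of two objects of the arrow category of `ModuleCat R`. -/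
noncomputable def arrowSum (f g : Arrow (ModuleCat R)) : Arrow (ModuleCat R) :=
  Arrow.mk (biprod.map f.hom g.hom)

section Helpers

lemma projective_of_retract {C : Type*} [Category C] {A B : C} (i : A ⟶ B) (p : B ⟶ A)
    (h : i ≫ p = 𝟙 A) (hB : Projective B) : Projective A where
  factors f e he := by
    haveI := hB
    refine ⟨i ≫ Projective.factorThru (p ≫ f) e, ?_⟩
    rw [Category.assoc, Projective.factorThru_comp, ← Category.assoc, h, Category.id_comp]

lemma projective_biprod {C : Type*} [Category C] [Preadditive C] [HasBinaryBiproducts C]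
    (A B : C) (hA : Projective A) (hB : Projective B) : Projective (A ⊞ B) where
  factors f e he := by
    haveI := hA; haveI := hB
    refine ⟨biprod.desc (Projective.factorThru (biprod.inl ≫ f) e)
      (Projective.factorThru (biprod.inr ≫ f) e), ?_⟩
    apply biprod.hom_ext' <;> simp

lemma arrow_epi_right {X Y : Arrow (ModuleCat R)} (e : X ⟶ Y) [Epi e] : Epi e.right := by
  constructor
  intro Z a b hab
  have key : (e ≫ Arrow.homMk (u := Y.hom ≫ a) (v := a) (Category.comp_id _) :
        X ⟶ Arrow.mk (𝟙 Z)) =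
      e ≫ Arrow.homMk (u := Y.hom ≫ b) (v := b) (Category.comp_id _) := by
    apply Arrow.hom_ext
    · show e.left ≫ Y.hom ≫ a = e.left ≫ Y.hom ≫ b
      rw [← Category.assoc, ← Category.assoc, Arrow.w e, Category.assoc, Category.assoc, hab]
    · show e.right ≫ a = e.right ≫ b
      exact hab
  have := (cancel_epi e).mp key
  exact congrArg CommaMorphism.right this

lemma arrow_epi_left {X Y : Arrow (ModuleCat R)} (e : X ⟶ Y) [Epi e] : Epi e.left := by
  constructor
  intro Z a b hab
  have key : (e ≫ Arrow.homMk (u := a) (v := (0 : Y.right ⟶ (0 : ModuleCat R)))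
        ((isZero_zero _).eq_of_tgt _ _) : X ⟶ Arrow.mk (0 : Z ⟶ (0 : ModuleCat R))) =
      e ≫ Arrow.homMk (u := b) (v := (0 : Y.right ⟶ (0 : ModuleCat R)))
        ((isZero_zero _).eq_of_tgt _ _) := by
    apply Arrow.hom_ext
    · show e.left ≫ a = e.left ≫ b
      exact hab
    · exact (isZero_zero _).eq_of_tgt _ _
  have := (cancel_epi e).mp key
  exact congrArg CommaMorphism.left this

lemma arrow_epi_of_components {X Y : Arrow (ModuleCat R)} (e : X ⟶ Y) (h1 : Epi e.left)
    (h2 : Epi e.right) : Epi e := by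
  constructor
  intro Z g h hgh
  apply Arrow.hom_ext
  · exact (cancel_epi e.left).mp (congrArg CommaMorphism.left hgh)
  · exact (cancel_epi e.right).mp (congrArg CommaMorphism.right hgh)

lemma arrowSum_projective (P Q : ModuleCat R) (hP : Projective P) (hQ : Projective Q) :
    Projective (arrowSum (Arrow.mk (0 : (0 : ModuleCat R) ⟶ P)) (Arrow.mk (𝟙 Q))) := by
  haveI := hP; haveI := hQ
  constructor
  intro E g φ e he
  haveI := he
  haveI hl : Epi e.left := arrow_epi_left e
  haveI hr : Epi e.right := arrow_epi_right e
  -- the object is `biprod.map (0 : 0 ⟶ P) (𝟙 Q) : 0 ⊞ Q ⟶ P ⊞ Q`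
  let l₁ : Q ⟶ E.left := Projective.factorThru (biprod.inr ≫ φ.left) e.left
  let L : (0 : ModuleCat R) ⊞ Q ⟶ E.left := biprod.desc 0 l₁
  let rP : P ⟶ E.right := Projective.factorThru (biprod.inl ≫ φ.right) e.right
  let RR : P ⊞ Q ⟶ E.right := biprod.desc rP (l₁ ≫ E.hom)
  have w : L ≫ E.hom =
      (arrowSum (Arrow.mk (0 : (0 : ModuleCat R) ⟶ P)) (Arrow.mk (𝟙 Q))).hom ≫ RR := by
    apply biprod.hom_ext'
    · show biprod.inl ≫ L ≫ E.hom = biprod.inl ≫ biprod.map _ _ ≫ RR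
      rw [biprod.inl_map_assoc]
      simp [L]
    · show biprod.inr ≫ L ≫ E.hom = biprod.inr ≫ biprod.map _ _ ≫ RR
      rw [biprod.inr_map_assoc]
      simp [L, RR]
  refine ⟨Arrow.homMk _ _ w, ?_⟩
  apply Arrow.hom_ext
  · show L ≫ e.left = φ.left
    apply biprod.hom_ext'
    · exact (isZero_zero _).eq_of_src _ _
    · simp [L, l₁]
  · show RR ≫ e.right = φ.right
    apply biprod.hom_ext'
    · simp [RR, rP]
    · show biprod.inr ≫ (biprod.desc rP (l₁ ≫ E.hom)) ≫ e.right = biprod.inr ≫ φ.right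
      rw [biprod.inr_desc_assoc, Category.assoc, ← Arrow.w e, ← Category.assoc,
        Projective.factorThru_comp]
      refine (Category.assoc _ _ _).trans ((whisker_eq biprod.inr (Arrow.w φ)).trans ?_)
      have : biprod.inr ≫ (arrowSum (Arrow.mk (0 : (0 : ModuleCat R) ⟶ P))
          (Arrow.mk (𝟙 Q))).hom = biprod.inr := by
        show biprod.inr ≫ biprod.map _ _ = _
        simp
      refine (Category.assoc _ _ _).symm.trans ?_
      exact congrArg (· ≫ φ.right) this

lemma arrow_projective_right {f : Arrow (ModuleCat R)} (hf : Projective f) :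
    Projective f.right := by
  haveI := hf
  constructor
  intro E X φ e he
  haveI := he
  let eA : (Arrow.mk (𝟙 E) : Arrow (ModuleCat R)) ⟶ Arrow.mk (𝟙 X) :=
    Arrow.homMk (u := e) (v := e) (by simp)
  have heA : Epi eA := arrow_epi_of_components eA he he
  let φA : f ⟶ Arrow.mk (𝟙 X) :=
    Arrow.homMk (u := f.hom ≫ φ) (v := φ) (by simp)
  refine ⟨(Projective.factorThru φA eA).right, ?_⟩
  have h2 := congrArg CommaMorphism.right (Projective.factorThru_comp φA eA)
  simp only [Arrow.comp_right, Arrow.homMk_right] at h2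
  exact h2

lemma arrow_projective_left {f : Arrow (ModuleCat R)} (hf : Projective f) :
    Projective f.left := by
  haveI := hf
  constructor
  intro E X φ e he
  haveI := he
  let eA : (Arrow.mk (0 : E ⟶ (0 : ModuleCat R))) ⟶ Arrow.mk (0 : X ⟶ (0 : ModuleCat R)) :=
    Arrow.homMk (u := e) (v := 𝟙 (0 : ModuleCat R)) ((isZero_zero _).eq_of_tgt _ _)
  have heA : Epi eA := arrow_epi_of_components eA he inferInstance
  let φA : f ⟶ Arrow.mk (0 : X ⟶ (0 : ModuleCat R)) :=
    Arrow.homMk (u := φ) (v := (0 : f.right ⟶ (0 : ModuleCat R)))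
      ((isZero_zero _).eq_of_tgt _ _)
  refine ⟨(Projective.factorThru φA eA).left, ?_⟩
  have h2 := congrArg CommaMorphism.left (Projective.factorThru_comp φA eA)
  simp only [Arrow.comp_left, Arrow.homMk_left] at h2
  exact h2

end Helpers

/-- An object `f : M₁ → M₀` of the arrow category of `ModuleCat R` is projective iff it is
isomorphic to a direct sum `(0 → P) ⊕ (id_Q : Q → Q)` with `P` and `Q` projective. -/
theorem arrow_projective_iff (f : Arrow (ModuleCat R)) :
    Projective f ↔ ∃ (P Q : ModuleCat R), Projective P ∧ Projective Q ∧
      Nonempty (f ≅ arrowSum (Arrow.mk (0 : (0 : ModuleCat R) ⟶ P)) (Arrow.mk (𝟙 Q))) := by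
  constructor
  · intro hf
    haveI := hf
    have hfl : Projective f.left := arrow_projective_left hf
    have hfr : Projective f.right := arrow_projective_right hf
    set G := arrowSum (Arrow.mk (0 : (0 : ModuleCat R) ⟶ f.right)) (Arrow.mk (𝟙 f.left))
      with hG
    -- the epimorphism `G ⟶ f`
    have wE : (biprod.desc (0 : (0 : ModuleCat R) ⟶ f.left) (𝟙 f.left)) ≫ f.hom =
        G.hom ≫ biprod.desc (𝟙 f.right) f.hom := by
      apply biprod.hom_ext'
      · exact (isZero_zero _).eq_of_src _ _
      · show biprod.inr ≫ _ = biprod.inr ≫ biprod.map _ _ ≫ _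
        rw [biprod.inr_map_assoc]
        simp
    set e : G ⟶ f := Arrow.homMk _ _ wE with he
    haveI hel : Epi e.left := by
      haveI h1 : Epi (biprod.inr ≫ (biprod.desc (0 : (0 : ModuleCat R) ⟶ f.left)
          (𝟙 f.left))) := by
        rw [biprod.inr_desc]; infer_instance
      have hrfl : e.left = biprod.desc (0 : (0 : ModuleCat R) ⟶ f.left) (𝟙 f.left) := rfl
      rw [hrfl]
      exact epi_of_epi biprod.inr _
    haveI her : Epi e.right := by
      haveI h1 : Epi (biprod.inl ≫ biprod.desc (𝟙 f.right) f.hom) := by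
        rw [biprod.inl_desc]; infer_instance
      have hrfl : e.right = biprod.desc (𝟙 f.right) f.hom := rfl
      rw [hrfl]
      exact epi_of_epi biprod.inl _
    haveI heE : Epi e := arrow_epi_of_components e hel her
    -- the section coming from projectivity
    set s : f ⟶ G := Projective.factorThru (𝟙 f) e with hs
    have hse : s ≫ e = 𝟙 f := Projective.factorThru_comp _ _
    have hsel : s.left ≫ e.left = 𝟙 f.left := by
      have := congrArg CommaMorphism.left hse; simpa using this
    have hser : s.right ≫ e.right = 𝟙 f.right := by
      have := congrArg CommaMorphism.right hse; simpa using this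
    -- the retraction of `f.hom`
    set π : f.right ⊞ f.left ⟶ (0 : ModuleCat R) ⊞ f.left :=
      biprod.map (0 : f.right ⟶ (0 : ModuleCat R)) (𝟙 f.left) with hπ
    set t : f.right ⟶ f.left := s.right ≫ π ≫ e.left with htdef
    have hGπ : G.hom ≫ π = 𝟙 ((0 : ModuleCat R) ⊞ f.left) := by
      show biprod.map _ _ ≫ biprod.map _ _ = _
      apply biprod.hom_ext'
      · exact (isZero_zero _).eq_of_src _ _
      · simp
    have ht : f.hom ≫ t = 𝟙 f.left := by
      have h3 : G.hom ≫ π ≫ e.left = e.left := by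
        refine ((Category.assoc _ _ _).symm.trans (eq_whisker hGπ _)).trans ?_
        exact Category.id_comp e.left
      rw [htdef, ← Category.assoc, ← Arrow.w s, Category.assoc, h3, hsel]
    -- the cokernel and the splitting
    set P := cokernel f.hom with hPdef
    set πc : f.right ⟶ P := cokernel.π f.hom with hπc
    have hσ0 : f.hom ≫ (𝟙 f.right - t ≫ (f.hom ≫ 𝟙 f.right)) = 0 := by
      rw [Preadditive.comp_sub, Category.comp_id, ← Category.assoc, ht, Category.id_comp,
        sub_self]
    set σ : P ⟶ f.right := cokernel.desc f.hom (𝟙 f.right - t ≫ (f.hom ≫ 𝟙 f.right)) hσ0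
      with hσdef
    have hπσ : πc ≫ σ = 𝟙 f.right - t ≫ (f.hom ≫ 𝟙 f.right) := cokernel.π_desc _ _ _
    have hσπ : σ ≫ πc = 𝟙 P := by
      rw [← cancel_epi πc, ← Category.assoc, hπσ]
      rw [Preadditive.sub_comp, Category.id_comp, Category.comp_id, Category.assoc, hπc,
        cokernel.condition, Limits.comp_zero, sub_zero, Category.comp_id]
    have hσt : σ ≫ t = 0 := by
      rw [← cancel_epi πc, ← Category.assoc, hπσ]
      rw [Preadditive.sub_comp, Category.id_comp, Category.comp_id, Category.assoc, ht,
        Category.comp_id, sub_self, Limits.comp_zero]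
    refine ⟨P, f.left, ?_, hfl, ?_⟩
    · -- P is projective : retract of f.right
      exact projective_of_retract σ πc hσπ hfr
    · -- the isomorphism
      have hLinv : (biprod.snd ≫ biprod.lift (0 : f.left ⟶ (0 : ModuleCat R)) (𝟙 f.left) :
          (0 : ModuleCat R) ⊞ f.left ⟶ _) = 𝟙 _ := by
        apply biprod.hom_ext
        · exact (isZero_zero _).eq_of_tgt _ _
        · simp
      refine ⟨Arrow.isoMk
        (Iso.mk (biprod.lift (0 : f.left ⟶ (0 : ModuleCat R)) (𝟙 f.left)) biprod.snd
          (by exact biprod.lift_snd _ _) hLinv)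
        (Iso.mk (biprod.lift πc t) (biprod.desc σ (f.hom ≫ 𝟙 f.right)) ?_ ?_) ?_⟩
      · refine biprod.lift_desc.trans ?_
        rw [hπσ]
        abel
      · show biprod.desc σ (f.hom ≫ 𝟙 f.right) ≫ biprod.lift πc t = 𝟙 (P ⊞ f.left)
        apply biprod.hom_ext' <;> apply biprod.hom_ext <;>
          simp [hσπ, hσt, ht, hπc]
        all_goals exact hσπ
      · show biprod.lift (0 : f.left ⟶ (0 : ModuleCat R)) (𝟙 f.left) ≫
            biprod.map (0 : (0 : ModuleCat R) ⟶ P) (𝟙 f.left) = f.hom ≫ biprod.lift πc t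
        apply biprod.hom_ext
        · rw [Category.assoc, Category.assoc, biprod.map_fst, biprod.lift_fst, hπc,
            cokernel.condition, ← Category.assoc, biprod.lift_fst, Limits.zero_comp]
        · rw [Category.assoc, Category.assoc, biprod.map_snd, biprod.lift_snd, ht,
            ← Category.assoc, biprod.lift_snd, Category.id_comp]
  · rintro ⟨P, Q, hP, hQ, ⟨i⟩⟩
    exact Projective.of_iso i.symm (arrowSum_projective P Q hP hQ)
end

section
/- Let R be a ring and let f : M₁ → M₀ be a morphism of R-modules, regarded as an object of Arrow(Mod R). Then f is an injective object of Arrow(Mod R) if and only if f is isomorphic in Arrow(Mod R) to a direct sum (I → 0) ⊕ (id_J : J → J) for some injective R-modules I and J. -/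
set_option maxHeartbeats 1000000
set_option synthInstance.maxHeartbeats 400000

open CategoryTheory CategoryTheory.Limits ZeroObject

variable {R : Type*} [Ring R]

namespace ArrowInjAux

lemma hom_ext {X Y : Arrow (ModuleCat R)} {u v : X ⟶ Y}
    (h1 : u.left = v.left) (h2 : u.right = v.right) : u = v :=
  CommaMorphism.ext h1 h2

/-- A morphism of arrows with monic components is monic. -/
lemma mono_of_components {X Y : Arrow (ModuleCat R)} (g : X ⟶ Y)
    (hl : Mono g.left) (hr : Mono g.right) : Mono g := by
  constructor
  intro Z u v h
  have h1 : u.left ≫ g.left = v.left ≫ g.left := by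
    rw [← Arrow.comp_left, ← Arrow.comp_left, h]
  have h2 : u.right ≫ g.right = v.right ≫ g.right := by
    rw [← Arrow.comp_right, ← Arrow.comp_right, h]
  exact hom_ext ((cancel_mono g.left).1 h1) ((cancel_mono g.right).1 h2)

/-- The left component of a mono of arrows is a mono. -/
lemma mono_left {X Y : Arrow (ModuleCat R)} (g : X ⟶ Y) [Mono g] : Mono g.left := by
  constructor
  intro T a b h
  let a' : Arrow.mk (𝟙 T) ⟶ X := { left := a, right := a ≫ X.hom, w := by simp }
  let b' : Arrow.mk (𝟙 T) ⟶ X := { left := b, right := b ≫ X.hom, w := by simp }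
  have hab : a' ≫ g = b' ≫ g := by
    apply hom_ext
    · rw [Arrow.comp_left, Arrow.comp_left]; simpa [a', b', Arrow.Hom.left] using h
    · show (a ≫ X.hom) ≫ g.right = (b ≫ X.hom) ≫ g.right
      have hw : X.hom ≫ g.right = g.left ≫ Y.hom := (Arrow.w g).symm
      rw [Category.assoc, Category.assoc, hw, ← Category.assoc, ← Category.assoc, h]
  have := (cancel_mono g).1 hab
  have := congrArg Arrow.Hom.left this
  simpa [a', b'] using this

/-- The right component of a mono of arrows is a mono. -/
lemma mono_right {X Y : Arrow (ModuleCat R)} (g : X ⟶ Y) [Mono g] : Mono g.right := by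
  constructor
  intro T a b h
  let a' : Arrow.mk (0 : (0 : ModuleCat R) ⟶ T) ⟶ X :=
    { left := 0, right := a, w := (isZero_zero _).eq_of_src _ _ }
  let b' : Arrow.mk (0 : (0 : ModuleCat R) ⟶ T) ⟶ X :=
    { left := 0, right := b, w := (isZero_zero _).eq_of_src _ _ }
  have hab : a' ≫ g = b' ≫ g := by
    apply hom_ext
    · exact (isZero_zero (ModuleCat R)).eq_of_src _ _
    · rw [Arrow.comp_right, Arrow.comp_right]; simpa [a', b', Arrow.Hom.right] using h
  have := (cancel_mono g).1 hab
  have := congrArg Arrow.Hom.right this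
  simpa [a', b'] using this

/-- `(I ⟶ 0)` is an injective arrow when `I` is injective. -/
lemma inj_first (I : ModuleCat R) (hI : Injective I) :
    Injective (Arrow.mk (0 : I ⟶ (0 : ModuleCat R))) := by
  haveI := hI
  constructor
  intro X Y h g hg
  haveI := hg
  haveI : Mono g.left := mono_left g
  let w : Y.left ⟶ I := Injective.factorThru h.left g.left
  refine ⟨{ left := w, right := 0, w := (isZero_zero _).eq_of_tgt _ _ }, ?_⟩
  apply hom_ext
  · show g.left ≫ w = h.left
    simp [w]
  · exact (isZero_zero (ModuleCat R)).eq_of_tgt _ _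

/-- `(𝟙 J)` is an injective arrow when `J` is injective. -/
lemma inj_second (J : ModuleCat R) (hJ : Injective J) :
    Injective (Arrow.mk (𝟙 J)) := by
  haveI := hJ
  constructor
  intro X Y h g hg
  haveI := hg
  haveI : Mono g.right := mono_right g
  let w : Y.right ⟶ J := Injective.factorThru h.right g.right
  refine ⟨{ left := Y.hom ≫ w, right := w, w := by simp }, ?_⟩
  apply hom_ext
  · show g.left ≫ Y.hom ≫ w = h.left
    have h1 : g.left ≫ Y.hom = X.hom ≫ g.right := Arrow.w g
    have h2 : h.left ≫ 𝟙 J = X.hom ≫ h.right := Arrow.w h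
    rw [← Category.assoc, h1, Category.assoc]
    simp only [w, Injective.comp_factorThru]
    simpa using h2.symm
  · show g.right ≫ w = h.right
    simp [w]

/-- The componentwise biproduct of injective arrows is injective. -/
lemma inj_sum (A B : Arrow (ModuleCat R)) (hA : Injective A) (hB : Injective B) :
    Injective (arrowSum A B) := by
  haveI := hA; haveI := hB
  constructor
  intro X Y h g hg
  haveI := hg
  let pA : arrowSum A B ⟶ A := { left := biprod.fst, right := biprod.fst, w := by simp [arrowSum] }
  let pB : arrowSum A B ⟶ B := { left := biprod.snd, right := biprod.snd, w := by simp [arrowSum] }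
  obtain ⟨kA, hkA⟩ := Injective.factors (h ≫ pA) g
  obtain ⟨kB, hkB⟩ := Injective.factors (h ≫ pB) g
  have hw : biprod.lift kA.left kB.left ≫ biprod.map A.hom B.hom =
      Y.hom ≫ biprod.lift kA.right kB.right := by
    apply biprod.hom_ext
    · simpa using Arrow.w kA
    · simpa using Arrow.w kB
  refine ⟨⟨biprod.lift kA.left kB.left, biprod.lift kA.right kB.right, hw⟩, ?_⟩
  have hAl := congrArg Arrow.Hom.left hkA
  have hAr := congrArg Arrow.Hom.right hkA
  have hBl := congrArg Arrow.Hom.left hkB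
  have hBr := congrArg Arrow.Hom.right hkB
  simp only [Arrow.comp_left, Arrow.comp_right] at hAl hAr hBl hBr
  apply hom_ext
  · show g.left ≫ biprod.lift kA.left kB.left = h.left
    apply biprod.hom_ext
    · simp [pA, Arrow.Hom.left] at hAl ⊢; exact hAl
    · simp [pB, Arrow.Hom.left] at hBl ⊢; exact hBl
  · show g.right ≫ biprod.lift kA.right kB.right = h.right
    apply biprod.hom_ext
    · simp [pA, Arrow.Hom.right] at hAr ⊢; exact hAr
    · simp [pB, Arrow.Hom.right] at hBr ⊢; exact hBr

end ArrowInjAux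

open ArrowInjAux in
/-- An object `f : M₁ → M₀` of the arrow category of `ModuleCat R` is injective iff it is
isomorphic to a direct sum `(I → 0) ⊕ (id_J : J → J)` with `I` and `J` injective. -/
theorem arrow_injective_iff (f : Arrow (ModuleCat R)) :
    Injective f ↔ ∃ (I J : ModuleCat R), Injective I ∧ Injective J ∧
      Nonempty (f ≅ arrowSum (Arrow.mk (0 : I ⟶ (0 : ModuleCat R))) (Arrow.mk (𝟙 J))) := by
  constructor
  · intro hf
    -- Step 1: f.left is injective
    have hleft : Injective f.left := by
      constructor
      intro A B p u hu
      haveI := hu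
      let uhat : Arrow.mk (𝟙 A) ⟶ Arrow.mk (𝟙 B) := { left := u, right := u, w := by simp }
      haveI : Mono uhat := mono_of_components uhat hu hu
      let phat : Arrow.mk (𝟙 A) ⟶ f := { left := p, right := p ≫ f.hom, w := by simp }
      obtain ⟨q, hq⟩ := hf.factors phat uhat
      refine ⟨q.left, ?_⟩
      have := congrArg Arrow.Hom.left hq
      rw [Arrow.comp_left] at this; simpa [uhat, phat, Arrow.Hom.left] using this
    -- Step 2: f.right is injective
    have hright : Injective f.right := by
      constructor
      intro A B p u hu
      haveI := hu
      let uhat : Arrow.mk (0 : (0 : ModuleCat R) ⟶ A) ⟶ Arrow.mk (0 : (0 : ModuleCat R) ⟶ B) :=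
        { left := 𝟙 _, right := u, w := (isZero_zero _).eq_of_src _ _ }
      haveI : Mono uhat := mono_of_components uhat (by dsimp [uhat]; infer_instance) hu
      let phat : Arrow.mk (0 : (0 : ModuleCat R) ⟶ A) ⟶ f :=
        { left := 0, right := p, w := (isZero_zero _).eq_of_src _ _ }
      obtain ⟨q, hq⟩ := hf.factors phat uhat
      refine ⟨q.right, ?_⟩
      have := congrArg Arrow.Hom.right hq
      rw [Arrow.comp_right] at this; simpa [uhat, phat, Arrow.Hom.right] using this
    -- Step 3: f.hom is a split epimorphism
    obtain ⟨s, hs⟩ : ∃ s : f.right ⟶ f.left, s ≫ f.hom = 𝟙 f.right := by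
      let m : Arrow.mk (0 : (0 : ModuleCat R) ⟶ f.right) ⟶ Arrow.mk (𝟙 f.right) :=
        { left := 0, right := 𝟙 _, w := (isZero_zero _).eq_of_src _ _ }
      haveI : Mono m := by
        apply mono_of_components
        · constructor
          intro T a b _
          exact (isZero_zero (ModuleCat R)).eq_of_tgt _ _
        · dsimp [m]; infer_instance
      let h : Arrow.mk (0 : (0 : ModuleCat R) ⟶ f.right) ⟶ f :=
        { left := 0, right := 𝟙 f.right, w := (isZero_zero _).eq_of_src _ _ }
      obtain ⟨q, hq⟩ := hf.factors h m
      have hqr : q.right = 𝟙 f.right := by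
        have := congrArg Arrow.Hom.right hq
        rw [Arrow.comp_right] at this; simpa [m, h, Arrow.Hom.right] using this
      refine ⟨q.left, ?_⟩
      have := Arrow.w q
      simpa [hqr] using this
    -- Step 4: build the decomposition
    haveI := hleft
    let I : ModuleCat R := kernel f.hom
    let ι : I ⟶ f.left := kernel.ι f.hom
    have hr0 : (𝟙 f.left - (f.hom ≫ s : f.left ⟶ f.left)) ≫ f.hom = 0 := by
      simp [Preadditive.sub_comp, Category.assoc, hs]
    let r : f.left ⟶ I := kernel.lift f.hom (𝟙 f.left - (f.hom ≫ s : f.left ⟶ f.left)) hr0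
    have hrι : r ≫ ι = 𝟙 f.left - (f.hom ≫ s : f.left ⟶ f.left) := kernel.lift_ι _ _ _
    have hιr : ι ≫ r = 𝟙 I := by
      rw [← cancel_mono ι, Category.assoc, hrι]
      simp [Preadditive.comp_sub, ι]
    have hsr : s ≫ r = 0 := by
      rw [← cancel_mono ι, Category.assoc, hrι]
      simp only [Preadditive.comp_sub, Category.comp_id, zero_comp]
      rw [← Category.assoc, hs, Category.id_comp, sub_self]
    have hIinj : Injective I := by
      constructor
      intro A B p u hu
      haveI := hu
      exact ⟨Injective.factorThru (p ≫ ι) u ≫ r, by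
        rw [← Category.assoc, Injective.comp_factorThru, Category.assoc, hιr, Category.comp_id]⟩
    refine ⟨I, f.right, hIinj, hright, ⟨?_⟩⟩
    refine Arrow.isoMk
      ⟨biprod.lift r f.hom, biprod.desc ι s, ?_, ?_⟩
      ⟨biprod.inr, biprod.snd, biprod.inr_snd, ?_⟩ ?_
    · refine biprod.lift_desc.trans ?_
      rw [hrι]
      abel
    · apply biprod.hom_ext'
      · apply biprod.hom_ext <;> simp [arrowSum, hιr, ι]
      · apply biprod.hom_ext <;> simp [arrowSum, hsr, hs]
    · apply biprod.hom_ext'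
      · exact (isZero_zero (ModuleCat R)).eq_of_src _ _
      · simp [arrowSum]
    · show biprod.lift r f.hom ≫ biprod.map (0 : I ⟶ (0 : ModuleCat R)) (𝟙 f.right) =
        f.hom ≫ biprod.inr
      apply biprod.hom_ext
      · apply (isZero_zero (ModuleCat R)).eq_of_tgt
      · simp
  · rintro ⟨I, J, hI, hJ, ⟨e⟩⟩
    exact Injective.of_iso e.symm (inj_sum _ _ (inj_first I hI) (inj_second J hJ))
end

section
/- Let C be an additive category in which every morphism has a kernel, and let M : C^op → Ab be a finitely presented additive functor, i.e. there is a morphism f : A₁ → A₀ of C and an exact sequence Hom(-, A₁) → Hom(-, A₀) → M → 0 of additive functors. Then, with K = ker f, the sequence 0 → Hom(-, K) → Hom(-, A₁) → Hom(-, A₀) → M → 0 is exact; in particular M has a projective resolution of length at most 2 by representable functors. -/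
open CategoryTheory CategoryTheory.Limits Opposite

/-- Let `C` be an additive category with kernels and `M : Cᵒᵖ ⥤ Ab` an additive functor which is
finitely presented by a morphism `f : A₁ ⟶ A₀`, i.e. there is an (objectwise) exact sequence
`Hom(-, A₁) → Hom(-, A₀) → M → 0`. Then, with `K = ker f`, the sequence
`0 → Hom(-, K) → Hom(-, A₁) → Hom(-, A₀) → M → 0` is (objectwise) exact; in particular `M` has
a projective resolution of length at most `2` by representable functors. -/
theorem finitely_presented_functor_resolution
    {C : Type*} [Category C] [Preadditive C] [HasKernels C]
    (M : Cᵒᵖ ⥤ AddCommGrpCat) [M.Additive]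
    {A₁ A₀ : C} (f : A₁ ⟶ A₀)
    (π : preadditiveYoneda.obj A₀ ⟶ M)
    (hπ : ∀ X : C, Function.Surjective (π.app (op X)))
    (hex : ∀ X : C, Function.Exact ((preadditiveYoneda.map f).app (op X)) (π.app (op X))) :
    ∀ X : C,
      Function.Injective ((preadditiveYoneda.map (kernel.ι f)).app (op X)) ∧
      Function.Exact ((preadditiveYoneda.map (kernel.ι f)).app (op X))
        ((preadditiveYoneda.map f).app (op X)) ∧
      Function.Exact ((preadditiveYoneda.map f).app (op X)) (π.app (op X)) ∧
      Function.Surjective (π.app (op X)) := by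
  intro X
  refine ⟨?_, ?_, hex X, hπ X⟩
  · intro g h hgh
    have : g ≫ kernel.ι f = h ≫ kernel.ι f := hgh
    exact (cancel_mono (kernel.ι f)).mp this
  · intro g
    constructor
    · intro hg
      exact ⟨kernel.lift f g hg, kernel.lift_ι f g hg⟩
    · rintro ⟨h, rfl⟩
      show (h ≫ kernel.ι f) ≫ f = 0
      exact (Category.assoc (h : X ⟶ kernel f) (kernel.ι f) f).trans
        ((congrArg _ (kernel.condition f)).trans comp_zero)
end

section
/- Let k be a field, let Λ be a finite-dimensional self-injective k-algebra and let ν be a k-algebra automorphism of Λ such that the (Λ,Λ)-bimodule _νΛ (Λ with left action twisted by ν) is isomorphic to the bimodule Hom_k(Λ, k) (i.e. ν is a Nakayama automorphism of Λ). Then the 3×3 matrix algebra T with entries T₁₁ = T₂₂ = T₃₃ = T₂₁ = T₃₂ = Λ, T₁₃ = _νΛ, and T₁₂ = T₂₃ = T₃₁ = 0, with multiplication induced by matrix multiplication and the Λ-bimodule structures, is again a self-injective finite-dimensional k-algebra. -/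
set_option linter.unusedSectionVars false

universe u

variable {k : Type u} [Field k] {Λ : Type u} [Ring Λ] [Algebra k Λ]

/-- The underlying additive group of the twisted `3×3` matrix algebra `T`: an element is the
tuple of its six possibly nonzero entries `(t₁₁, t₂₁, t₂₂, t₃₂, t₃₃, t₁₃)` (the entries
`t₁₂, t₂₃, t₃₁` being zero). -/
structure TAlg (Λ : Type u) where
  toProd : Λ × Λ × Λ × Λ × Λ × Λ

namespace TAlg

lemma toProd_injective : Function.Injective (toProd (Λ := Λ)) := by
  rintro ⟨a⟩ ⟨b⟩ h; cases h; rfl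

instance : Zero (TAlg Λ) := ⟨⟨0⟩⟩
instance : Add (TAlg Λ) := ⟨fun x y => ⟨x.toProd + y.toProd⟩⟩
instance : Neg (TAlg Λ) := ⟨fun x => ⟨-x.toProd⟩⟩
instance : Sub (TAlg Λ) := ⟨fun x y => ⟨x.toProd - y.toProd⟩⟩
instance : SMul ℕ (TAlg Λ) := ⟨fun n x => ⟨n • x.toProd⟩⟩
instance : SMul ℤ (TAlg Λ) := ⟨fun n x => ⟨n • x.toProd⟩⟩

instance : AddCommGroup (TAlg Λ) :=
  toProd_injective.addCommGroup _ rfl (fun _ _ => rfl) (fun _ => rfl) (fun _ _ => rfl)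
    (fun _ _ => rfl) (fun _ _ => rfl)

/-- `toProd` as an additive group homomorphism. -/
def toProdHom : TAlg Λ →+ Λ × Λ × Λ × Λ × Λ × Λ where
  toFun := toProd
  map_zero' := rfl
  map_add' _ _ := rfl

instance : SMul k (TAlg Λ) := ⟨fun c x => ⟨c • x.toProd⟩⟩

instance : Module k (TAlg Λ) :=
  toProd_injective.module k toProdHom (fun _ _ => rfl)

variable (ν : Λ ≃ₐ[k] Λ)

/-- The multiplication of `T`, induced by matrix multiplication and the bimodule structures:
the `(1,3)` entries live in the twisted bimodule `_νΛ`, whence the twist by `ν` when an entry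
`t₁₁ ∈ T₁₁ = Λ` acts on the left on an entry of `T₁₃ = _νΛ`; products landing in the zero
entries `(1,2), (2,3), (3,1)` are discarded. -/
def tMul : TAlg Λ → TAlg Λ → TAlg Λ
  | ⟨a11, a21, a22, a32, a33, a13⟩, ⟨b11, b21, b22, b32, b33, b13⟩ =>
    ⟨a11 * b11, a21 * b11 + a22 * b21, a22 * b22, a32 * b22 + a33 * b32, a33 * b33,
      ν a11 * b13 + a13 * b33⟩

/-- The unit of `T`: the identity matrix. -/
def tOne : TAlg Λ := ⟨(1, 0, 1, 0, 1, 0)⟩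

lemma tMul_assoc (x y z : TAlg Λ) : tMul ν (tMul ν x y) z = tMul ν x (tMul ν y z) := by
  rcases x with ⟨⟨a, b, c, d, e, f⟩⟩; rcases y with ⟨⟨a', b', c', d', e', f'⟩⟩
  rcases z with ⟨⟨a'', b'', c'', d'', e'', f''⟩⟩
  simp only [tMul, tOne, mk.injEq, Prod.mk.injEq, mul_add, add_mul, mul_assoc, map_mul]
  and_intros <;> first | trivial | abel

lemma tOne_mul (x : TAlg Λ) : tMul ν (tOne (Λ := Λ)) x = x := by
  rcases x with ⟨⟨a, b, c, d, e, f⟩⟩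
  simp [tMul, tOne]

lemma tMul_one (x : TAlg Λ) : tMul ν x (tOne (Λ := Λ)) = x := by
  rcases x with ⟨⟨a, b, c, d, e, f⟩⟩
  simp [tMul, tOne]

lemma tMul_add (x y z : TAlg Λ) : tMul ν x (y + z) = tMul ν x y + tMul ν x z := by
  rcases x with ⟨⟨a, b, c, d, e, f⟩⟩; rcases y with ⟨⟨a', b', c', d', e', f'⟩⟩
  rcases z with ⟨⟨a'', b'', c'', d'', e'', f''⟩⟩
  show tMul ν _ ⟨_⟩ = (⟨(tMul ν _ _).toProd + (tMul ν _ _).toProd⟩ : TAlg Λ)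
  simp only [tMul, Prod.mk_add_mk, mk.injEq, Prod.mk.injEq, mul_add, add_mul]
  and_intros <;> first | trivial | abel

lemma add_tMul (x y z : TAlg Λ) : tMul ν (x + y) z = tMul ν x z + tMul ν y z := by
  rcases x with ⟨⟨a, b, c, d, e, f⟩⟩; rcases y with ⟨⟨a', b', c', d', e', f'⟩⟩
  rcases z with ⟨⟨a'', b'', c'', d'', e'', f''⟩⟩
  show tMul ν ⟨_⟩ _ = (⟨(tMul ν _ _).toProd + (tMul ν _ _).toProd⟩ : TAlg Λ)
  simp only [tMul, Prod.mk_add_mk, mk.injEq, Prod.mk.injEq, mul_add, add_mul, map_add]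
  and_intros <;> first | trivial | abel

lemma zero_tMul (x : TAlg Λ) : tMul ν (0 : TAlg Λ) x = 0 := by
  rcases x with ⟨⟨a, b, c, d, e, f⟩⟩
  show tMul ν ⟨(0, 0, 0, 0, 0, 0)⟩ _ = _
  simp [tMul]
  rfl

lemma tMul_zero (x : TAlg Λ) : tMul ν x (0 : TAlg Λ) = 0 := by
  rcases x with ⟨⟨a, b, c, d, e, f⟩⟩
  show tMul ν _ ⟨(0, 0, 0, 0, 0, 0)⟩ = _
  simp [tMul]
  rfl

/-- The ring structure of the twisted `3×3` matrix algebra `T`. -/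
@[reducible]
def tRing (ν : Λ ≃ₐ[k] Λ) : Ring (TAlg Λ) :=
  { (inferInstanceAs (AddCommGroup (TAlg Λ)) : AddCommGroup (TAlg Λ)) with
    mul := tMul ν
    one := tOne
    mul_assoc := tMul_assoc ν
    one_mul := tOne_mul ν
    mul_one := tMul_one ν
    left_distrib := tMul_add ν
    right_distrib := add_tMul ν
    zero_mul := zero_tMul ν
    mul_zero := tMul_zero ν }

/-- The `k`-algebra structure of the twisted `3×3` matrix algebra `T`. -/
def tAlgebra :
    letI : Ring (TAlg Λ) := tRing ν
    Algebra k (TAlg Λ) := by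
  letI : Ring (TAlg Λ) := tRing ν
  refine Algebra.ofModule ?_ ?_
  · rintro r ⟨⟨a, b, c, d, e, f⟩⟩ ⟨⟨a', b', c', d', e', f'⟩⟩
    show tMul ν ⟨r • _⟩ _ = (⟨r • (tMul ν _ _).toProd⟩ : TAlg Λ)
    simp only [tMul, Prod.smul_mk, mk.injEq, Prod.mk.injEq, smul_add, smul_mul_assoc,
      map_smul]
  · rintro r ⟨⟨a, b, c, d, e, f⟩⟩ ⟨⟨a', b', c', d', e', f'⟩⟩
    show tMul ν _ ⟨r • _⟩ = (⟨r • (tMul ν _ _).toProd⟩ : TAlg Λ)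
    simp only [tMul, Prod.smul_mk, mk.injEq, Prod.mk.injEq, smul_add, mul_smul_comm]

/-! ### Auxiliary material for the proof -/

/-- `toProd` as a `k`-linear equivalence. -/
def prodLinearEquiv : TAlg Λ ≃ₗ[k] (Λ × Λ × Λ × Λ × Λ × Λ) where
  toFun := toProd
  invFun := mk
  map_add' _ _ := rfl
  map_smul' _ _ := rfl
  left_inv := fun ⟨_⟩ => rfl
  right_inv := fun _ => rfl

variable (ν : Λ ≃ₐ[k] Λ)

lemma tMul_smul (c : k) (x y : TAlg Λ) : tMul ν x (c • y) = c • tMul ν x y := by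
  rcases x with ⟨⟨a, b, cc, d, ee, f⟩⟩; rcases y with ⟨⟨a', b', c', d', e', f'⟩⟩
  show tMul ν _ ⟨c • _⟩ = (⟨c • (tMul ν _ _).toProd⟩ : TAlg Λ)
  simp only [tMul, Prod.smul_mk, mk.injEq, Prod.mk.injEq, smul_add, mul_smul_comm]

lemma smul_tMul' (c : k) (x y : TAlg Λ) : tMul ν (c • x) y = c • tMul ν x y := by
  rcases x with ⟨⟨a, b, cc, d, ee, f⟩⟩; rcases y with ⟨⟨a', b', c', d', e', f'⟩⟩
  show tMul ν ⟨c • _⟩ _ = (⟨c • (tMul ν _ _).toProd⟩ : TAlg Λ)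
  simp only [tMul, Prod.smul_mk, mk.injEq, Prod.mk.injEq, smul_add, smul_mul_assoc, map_smul]

variable (e : Λ ≃ₗ[k] (Λ →ₗ[k] k))

/-- The Frobenius form on `T`: the sum of `x ↦ (e x) 1` over the entries `(2,1)`, `(3,2)`
and `(1,3)`. -/
def lamT : TAlg Λ →ₗ[k] k where
  toFun t := e t.toProd.2.1 1 + e t.toProd.2.2.2.1 1 + e t.toProd.2.2.2.2.2 1
  map_add' x y := by
    rcases x with ⟨⟨a, b, c, d, ee, f⟩⟩; rcases y with ⟨⟨a', b', c', d', e', f'⟩⟩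
    show e (b + b') 1 + e (d + d') 1 + e (f + f') 1 =
      (e b 1 + e d 1 + e f 1) + (e b' 1 + e d' 1 + e f' 1)
    simp only [map_add, LinearMap.add_apply]; ring
  map_smul' c x := by
    rcases x with ⟨⟨a, b, cc, d, ee, f⟩⟩
    show e (c • b) 1 + e (c • d) 1 + e (c • f) 1 = c • (e b 1 + e d 1 + e f 1)
    simp only [map_smul, LinearMap.smul_apply, smul_add]

/-- The map `t ↦ λ(t · _)` from `T` to its `k`-linear dual. -/
def Phi : TAlg Λ →ₗ[k] Module.Dual k (TAlg Λ) where
  toFun t :=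
    { toFun := fun u => lamT e (tMul ν t u)
      map_add' := fun u v => by
        show lamT e (tMul ν t (u + v)) = lamT e (tMul ν t u) + lamT e (tMul ν t v)
        rw [tMul_add, map_add]
      map_smul' := fun c u => by
        show lamT e (tMul ν t (c • u)) = c • lamT e (tMul ν t u)
        rw [tMul_smul, map_smul] }
  map_add' t s := by
    ext u
    show lamT e (tMul ν (t + s) u) = lamT e (tMul ν t u) + lamT e (tMul ν s u)
    rw [add_tMul, map_add]
  map_smul' c t := by
    ext u
    show lamT e (tMul ν (c • t) u) = c • lamT e (tMul ν t u)
    rw [smul_tMul', map_smul]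

lemma Phi_apply (t u : TAlg Λ) : Phi ν e t u = lamT e (tMul ν t u) := rfl

lemma Phi_injective (he₁ : ∀ a x y : Λ, e (ν a * x) y = e x (y * a))
    (he₂ : ∀ x b y : Λ, e (x * b) y = e x (b * y)) :
    Function.Injective (Phi ν e) := by
  rw [← LinearMap.ker_eq_bot, LinearMap.ker_eq_bot']
  rintro ⟨⟨a, b, c, d, ee, f⟩⟩ ht
  have h : ∀ u : TAlg Λ, lamT e (tMul ν ⟨(a, b, c, d, ee, f)⟩ u) = 0 :=
    fun u => DFunLike.congr_fun ht u
  have key : ∀ x : Λ, (∀ φ : Module.Dual k Λ, φ x = 0) → x = 0 := fun x hx =>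
    (Module.forall_dual_apply_eq_zero_iff k x).mp hx
  have ha : a = 0 := by
    refine key a fun φ => ?_
    obtain ⟨f', rfl⟩ := e.surjective φ
    have := h ⟨(0, 0, 0, 0, 0, f')⟩
    simp only [tMul, lamT, LinearMap.coe_mk, AddHom.coe_mk, mul_zero, zero_mul, add_zero,
      zero_add, map_zero, LinearMap.zero_apply, he₁ a f' 1, one_mul] at this
    exact this
  have hf : f = 0 := by
    have : ∀ e' : Λ, e f e' = 0 := by
      intro e'
      have := h ⟨(0, 0, 0, 0, e', 0)⟩
      simp only [tMul, lamT, LinearMap.coe_mk, AddHom.coe_mk, mul_zero, zero_mul, add_zero,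
        zero_add, map_zero, LinearMap.zero_apply, he₂ f e' 1, mul_one] at this
      exact this
    exact e.injective (by ext y; simp [this y])
  have hb : b = 0 := by
    have : ∀ a' : Λ, e b a' = 0 := by
      intro a'
      have := h ⟨(a', 0, 0, 0, 0, 0)⟩
      simp only [tMul, lamT, LinearMap.coe_mk, AddHom.coe_mk, mul_zero, zero_mul, add_zero,
        zero_add, map_zero, LinearMap.zero_apply, he₂ b a' 1, mul_one] at this
      exact this
    exact e.injective (by ext y; simp [this y])
  have hc : c = 0 := by
    have : ∀ b' : Λ, e c b' = 0 := by
      intro b'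
      have := h ⟨(0, b', 0, 0, 0, 0)⟩
      simp only [tMul, lamT, LinearMap.coe_mk, AddHom.coe_mk, mul_zero, zero_mul, add_zero,
        zero_add, map_zero, LinearMap.zero_apply, he₂ c b' 1, mul_one] at this
      exact this
    exact e.injective (by ext y; simp [this y])
  have hd : d = 0 := by
    have : ∀ c' : Λ, e d c' = 0 := by
      intro c'
      have := h ⟨(0, 0, c', 0, 0, 0)⟩
      simp only [tMul, lamT, LinearMap.coe_mk, AddHom.coe_mk, mul_zero, zero_mul, add_zero,
        zero_add, map_zero, LinearMap.zero_apply, he₂ d c' 1, mul_one] at this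
      exact this
    exact e.injective (by ext y; simp [this y])
  have hee : ee = 0 := by
    have : ∀ d' : Λ, e ee d' = 0 := by
      intro d'
      have := h ⟨(0, 0, 0, d', 0, 0)⟩
      simp only [tMul, lamT, LinearMap.coe_mk, AddHom.coe_mk, mul_zero, zero_mul, add_zero,
        zero_add, map_zero, LinearMap.zero_apply, he₂ ee d' 1, mul_one] at this
      exact this
    exact e.injective (by ext y; simp [this y])
  rw [ha, hb, hc, hd, hee, hf]; rfl

lemma Phi_bijective [FiniteDimensional k Λ]
    (he₁ : ∀ a x y : Λ, e (ν a * x) y = e x (y * a))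
    (he₂ : ∀ x b y : Λ, e (x * b) y = e x (b * y)) :
    Function.Bijective (Phi ν e) := by
  haveI : FiniteDimensional k (TAlg Λ) :=
    Module.Finite.equiv (prodLinearEquiv (k := k) (Λ := Λ)).symm
  have inj := Phi_injective ν e he₁ he₂
  exact ⟨inj, (LinearMap.injective_iff_surjective_of_finrank_eq_finrank
    (Subspace.dual_finrank_eq (V := TAlg Λ)).symm).mp inj⟩

end TAlg

open TAlg in
/-- If `Λ` is a finite-dimensional self-injective `k`-algebra and `ν` is a Nakayama
automorphism of `Λ` (i.e. the twisted bimodule `_νΛ` is isomorphic to the bimodule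
`Hom_k(Λ, k)`), then the twisted `3×3` matrix algebra `T` (with diagonal entries `Λ`,
entries `T₂₁ = T₃₂ = Λ`, `T₁₃ = _νΛ` and the remaining entries zero) is again a
self-injective finite-dimensional `k`-algebra. -/
theorem tAlg_finite_and_selfinjective
    (k : Type u) [Field k] (Λ : Type u) [Ring Λ] [Algebra k Λ]
    [FiniteDimensional k Λ]
    -- `Λ` is self-injective: injective as a right module over itself
    (hΛ : Module.Injective Λᵐᵒᵖ Λ)
    (ν : Λ ≃ₐ[k] Λ)
    -- `ν` is a Nakayama automorphism: a `(Λ,Λ)`-bimodule isomorphism `_νΛ ≅ Hom_k(Λ, k)`,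
    -- where `(a · f · b) (y) = f (b * y * a)` on the dual and `a · x · b = ν a * x * b` on `_νΛ`
    (e : Λ ≃ₗ[k] (Λ →ₗ[k] k))
    (he₁ : ∀ a x y : Λ, e (ν a * x) y = e x (y * a))
    (he₂ : ∀ x b y : Λ, e (x * b) y = e x (b * y)) :
    letI : Ring (TAlg Λ) := tRing ν
    letI : Algebra k (TAlg Λ) := tAlgebra ν
    Module.Finite k (TAlg Λ) ∧ Module.Injective (TAlg Λ)ᵐᵒᵖ (TAlg Λ) := by
  letI : Ring (TAlg Λ) := tRing ν
  letI : Algebra k (TAlg Λ) := tAlgebra ν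
  haveI fin : Module.Finite k (TAlg Λ) :=
    Module.Finite.equiv (prodLinearEquiv (k := k) (Λ := Λ)).symm
  refine ⟨fin, ?_⟩
  -- `Φ : T ≃ D(T)` is a right `T`-module isomorphism onto the dual of `T`.
  let Φ : TAlg Λ ≃ₗ[k] Module.Dual k (TAlg Λ) :=
    LinearEquiv.ofBijective (Phi ν e) (Phi_bijective ν e he₁ he₂)
  have hΦ : ∀ t u : TAlg Λ, Φ t u = lamT e (tMul ν t u) := fun t u => rfl
  -- multiplication in the ring is `tMul ν`
  have hmul : ∀ t u : TAlg Λ, t * u = tMul ν t u := fun _ _ => rfl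
  constructor
  intro X Y _ _ _ _ f hf g
  -- view `X` and `Y` as `k`-vector spaces via `k → Tᵐᵒᵖ`
  letI : Module k X := Module.compHom X (algebraMap k (TAlg Λ)ᵐᵒᵖ)
  letI : Module k Y := Module.compHom Y (algebraMap k (TAlg Λ)ᵐᵒᵖ)
  have hsmulX : ∀ (c : k) (a : (TAlg Λ)ᵐᵒᵖ) (x : X), (c • a) • x = c • (a • x) := by
    intro c a x
    show (c • a) • x = algebraMap k (TAlg Λ)ᵐᵒᵖ c • (a • x)
    rw [← mul_smul]; exact congrArg (· • x) (Algebra.smul_def c a)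
  have hsmulY : ∀ (c : k) (a : (TAlg Λ)ᵐᵒᵖ) (y : Y), (c • a) • y = c • (a • y) := by
    intro c a y
    show (c • a) • y = algebraMap k (TAlg Λ)ᵐᵒᵖ c • (a • y)
    rw [← mul_smul]; exact congrArg (· • y) (Algebra.smul_def c a)
  -- `f` as a `k`-linear map
  let fk : X →ₗ[k] Y :=
    { toFun := f
      map_add' := f.map_add
      map_smul' := fun c x => f.map_smul (algebraMap k (TAlg Λ)ᵐᵒᵖ c) x }
  -- `ĝ := λ ∘ g` as a `k`-linear functional on `X`
  have hopsmul : ∀ (c : k) (t : TAlg Λ),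
      algebraMap k (TAlg Λ)ᵐᵒᵖ c • t = c • t := by
    intro c t
    rw [MulOpposite.algebraMap_apply, op_smul_eq_mul, ← Algebra.commutes,
      ← Algebra.smul_def]
    rfl
  let gk : X →ₗ[k] k :=
    { toFun := fun x => lamT e (g x)
      map_add' := fun x y => by
        show lamT e (g (x + y)) = lamT e (g x) + lamT e (g y)
        rw [g.map_add, map_add]
      map_smul' := fun c x => by
        show lamT e (g (algebraMap k (TAlg Λ)ᵐᵒᵖ c • x)) = c • lamT e (g x)
        rw [g.map_smul, hopsmul, map_smul] }
  -- extend `ĝ` along the injection `f` (possible since `k` is a field)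
  obtain ⟨π, hπ⟩ := fk.exists_leftInverse_of_injective (LinearMap.ker_eq_bot.mpr hf)
  let hk : Y →ₗ[k] k := gk.comp π
  have hext : ∀ x : X, hk (f x) = gk x := by
    intro x
    show gk (π (fk x)) = gk x
    rw [show π (fk x) = x from DFunLike.congr_fun hπ x]
  -- the candidate extension of `g`
  let F : Y → Module.Dual k (TAlg Λ) := fun y =>
    { toFun := fun u => hk (MulOpposite.op u • y)
      map_add' := fun u v => by
        show hk (MulOpposite.op (u + v) • y)
          = hk (MulOpposite.op u • y) + hk (MulOpposite.op v • y)
        rw [show MulOpposite.op (u + v) • y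
            = MulOpposite.op u • y + MulOpposite.op v • y by
          rw [MulOpposite.op_add, add_smul], map_add]
      map_smul' := fun c u => by
        show hk (MulOpposite.op (c • u) • y) = c • hk (MulOpposite.op u • y)
        rw [show MulOpposite.op (c • u) • y = c • (MulOpposite.op u • y) by
          rw [MulOpposite.op_smul, hsmulY], map_smul] }
  have hFsmul : ∀ (s : TAlg Λ) (y : Y) (u : TAlg Λ),
      F (MulOpposite.op s • y) u = F y (s * u) := by
    intro s y u
    show hk (MulOpposite.op u • MulOpposite.op s • y) = hk (MulOpposite.op (s * u) • y)
    rw [← mul_smul, ← MulOpposite.op_mul]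
  refine ⟨{ toFun := fun y => Φ.symm (F y)
            map_add' := fun y z => by
              show Φ.symm (F (y + z)) = Φ.symm (F y) + Φ.symm (F z)
              rw [show F (y + z) = F y + F z by
                ext u; show hk (MulOpposite.op u • (y + z)) = _
                rw [smul_add, map_add]; rfl, map_add]
            map_smul' := fun a y => by
              show Φ.symm (F (a • y)) = a • Φ.symm (F y)
              rw [LinearEquiv.symm_apply_eq]
              ext u
              obtain ⟨s, rfl⟩ := MulOpposite.op_surjective a
              rw [hFsmul s y u]
              show F y (s * u) = lamT e (tMul ν (MulOpposite.op s • Φ.symm (F y)) u)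
              rw [show MulOpposite.op s • Φ.symm (F y) = Φ.symm (F y) * s from rfl,
                hmul (Φ.symm (F y)) s, tMul_assoc, ← hmul s u,
                ← hΦ (Φ.symm (F y)) (s * u), LinearEquiv.apply_symm_apply] }, ?_⟩
  intro x
  show Φ.symm (F (f x)) = g x
  rw [LinearEquiv.symm_apply_eq]
  ext u
  show hk (MulOpposite.op u • f x) = Φ (g x) u
  rw [show MulOpposite.op u • f x = f (MulOpposite.op u • x) from (f.map_smul _ x).symm,
    hext, hΦ]
  show lamT e (g (MulOpposite.op u • x)) = lamT e (tMul ν (g x) u)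
  rw [g.map_smul, show MulOpposite.op u • g x = g x * u from rfl, hmul]
end
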